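/- Let d ≥ 2, λ > 0, h > 0 and c ∈ ℝ^d. Then there exists a unique x ∈ Δ_d such that for every i ∈ {1,…,d}, x_i − h·λ·∑_{j ≠ i} 1/(x_i − x_j) = c_i. Consequently, each step of the semi-implicit Euler–Maruyama scheme for the non-colliding particle system is well defined and takes values in Δ_d. -/

import Mathlib

open Finset

noncomputable def Phi {d : ℕ} (lam h : ℝ) (c : Fin d → ℝ) (x : Fin d → ℝ) : ℝ :=
  ∑ i, ((x i) ^ 2 / 2 - c i * x i)
    - h * lam / 2 * ∑ i, ∑ j ∈ Finset.univ.filter (fun j => j ≠ i), Real.log (x i - x j)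

lemma hasDerivAt_phi_update {d : ℕ} (lam h : ℝ) (c x : Fin d → ℝ) (i : Fin d)
    (hx : ∀ j, j ≠ i → x j ≠ x i) :
    HasDerivAt (fun t => Phi lam h c (Function.update x i t))
      (x i - c i - h * lam * ∑ j ∈ Finset.univ.filter (fun j => j ≠ i), (x i - x j)⁻¹) (x i) := by
  classical
  -- quadratic part
  have h1 : HasDerivAt (fun t => ∑ k, ((Function.update x i t k) ^ 2 / 2
      - c k * Function.update x i t k)) (∑ k, if k = i then x i - c i else 0) (x i) := by
    apply HasDerivAt.fun_sum
    intro k _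
    by_cases hk : k = i
    · subst hk
      simp only [Function.update_self]
      have : HasDerivAt (fun t : ℝ => t ^ 2 / 2 - c k * t) (2 * (x k) ^ 1 / 2 - c k * 1) (x k) :=
        (((hasDerivAt_pow 2 (x k))).div_const 2).fun_sub ((hasDerivAt_id (x k)).const_mul (c k))
      refine this.congr_deriv ?_
      simp
    · simp only [Function.update_of_ne hk, if_neg hk]
      exact hasDerivAt_const _ _
  -- log part
  have h2 : HasDerivAt (fun t => ∑ k, ∑ j ∈ Finset.univ.filter (fun j => j ≠ k),
      Real.log (Function.update x i t k - Function.update x i t j))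
      (∑ k, ∑ j ∈ Finset.univ.filter (fun j => j ≠ k),
        (if k = i then (x i - x j)⁻¹ else if j = i then (x i - x k)⁻¹ else 0)) (x i) := by
    apply HasDerivAt.fun_sum
    intro k _
    apply HasDerivAt.fun_sum
    intro j hj
    have hjk : j ≠ k := (Finset.mem_filter.mp hj).2
    by_cases hk : k = i
    · subst hk
      simp only [Function.update_self, Function.update_of_ne hjk]
      have hne : x k - x j ≠ 0 := sub_ne_zero.mpr (Ne.symm (hx j hjk))
      have hbase : HasDerivAt (fun t : ℝ => t - x j) 1 (x k) :=
        (hasDerivAt_id (x k)).sub_const (x j)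
      have hd := hbase.log hne
      refine hd.congr_deriv ?_
      simp
    · by_cases hji : j = i
      · subst hji
        simp only [Function.update_self, Function.update_of_ne hk]
        have hne : x k - x j ≠ 0 := sub_ne_zero.mpr (hx k hk)
        have hbase : HasDerivAt (fun t : ℝ => x k - t) (-1) (x j) := by
          simpa using (hasDerivAt_const (x j) (x k)).fun_sub (hasDerivAt_id (x j))
        have hd := hbase.log hne
        refine hd.congr_deriv ?_
        have : (x j - x k)⁻¹ = -1 / (x k - x j) := by
          rw [div_eq_mul_inv, neg_one_mul, ← inv_neg, neg_sub]
        simp [this, hk]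
      · simp only [Function.update_of_ne hk, Function.update_of_ne hji, if_neg hk, if_neg hji]
        exact hasDerivAt_const _ _
  have h3 := h1.fun_sub (h2.const_mul (h * lam / 2))
  have e1 : (∑ k, if k = i then x i - c i else 0) = x i - c i := by
    simp
  have e2 : (∑ k, ∑ j ∈ Finset.univ.filter (fun j => j ≠ k),
        (if k = i then (x i - x j)⁻¹ else if j = i then (x i - x k)⁻¹ else 0))
      = 2 * ∑ j ∈ Finset.univ.filter (fun j => j ≠ i), (x i - x j)⁻¹ := by
    have inner : ∀ k, (∑ j ∈ Finset.univ.filter (fun j => j ≠ k),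
        (if k = i then (x i - x j)⁻¹ else if j = i then (x i - x k)⁻¹ else 0))
        = if k = i then (∑ j ∈ Finset.univ.filter (fun j => j ≠ i), (x i - x j)⁻¹)
          else (x i - x k)⁻¹ := by
      intro k
      by_cases hk : k = i
      · subst hk; simp
      · rw [if_neg hk]
        have hmem : i ∈ Finset.univ.filter (fun j => j ≠ k) := by
          simp [Ne.symm hk]
        calc (∑ j ∈ Finset.univ.filter (fun j => j ≠ k),
            (if k = i then (x i - x j)⁻¹ else if j = i then (x i - x k)⁻¹ else 0))
            = ∑ j ∈ Finset.univ.filter (fun j => j ≠ k),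
              (if j = i then (x i - x k)⁻¹ else 0) := by
              refine Finset.sum_congr rfl fun j _ => by rw [if_neg hk]
          _ = (x i - x k)⁻¹ := by
              rw [Finset.sum_ite_eq' (Finset.univ.filter (fun j => j ≠ k)) i
                (fun _ => (x i - x k)⁻¹), if_pos hmem]
    have efilter : (Finset.univ.filter (fun j => j ≠ i)) = Finset.univ.erase i := by
      ext j; simp [Finset.mem_erase, and_comm]
    rw [Finset.sum_congr rfl (fun k _ => inner k), efilter,
      ← Finset.add_sum_erase _ _ (Finset.mem_univ i), if_pos rfl]
    have erest : ∑ k ∈ Finset.univ.erase i,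
        (if k = i then (∑ j ∈ Finset.univ.erase i, (x i - x j)⁻¹) else (x i - x k)⁻¹)
        = ∑ k ∈ Finset.univ.erase i, (x i - x k)⁻¹ :=
      Finset.sum_congr rfl fun k hk => by rw [if_neg (Finset.mem_erase.mp hk).1]
    rw [erest]; ring
  rw [e1, e2] at h3
  have hfun : (fun t => Phi lam h c (Function.update x i t))
      = fun t => (∑ k, ((Function.update x i t k) ^ 2 / 2 - c k * Function.update x i t k))
        - h * lam / 2 * ∑ k, ∑ j ∈ Finset.univ.filter (fun j => j ≠ k),
            Real.log (Function.update x i t k - Function.update x i t j) := by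
    funext t; rfl
  rw [hfun]
  refine h3.congr_deriv ?_
  ring


lemma log_le_abs' (u : ℝ) : Real.log u ≤ |u| := by
  rw [← Real.log_abs]
  calc Real.log |u| ≤ |u| - 1 + 1 := by
        rcases eq_or_ne u 0 with rfl | hu
        · simp
        · have := Real.add_one_le_exp (Real.log |u|)
          have h2 : Real.exp (Real.log |u|) = |u| := Real.exp_log (abs_pos.mpr hu)
          linarith
    _ = |u| := by ring
  
lemma Phi_lower {d : ℕ} (lam h : ℝ) (c : Fin d → ℝ) (hlh : 0 ≤ h * lam)
    (x : Fin d → ℝ) (k : Fin d) :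
    (x k) ^ 2 / 2 - (|c k| + h * lam * d) * |x k| - (∑ i, (|c i| + h * lam * d) ^ 2 / 2)
      ≤ Phi lam h c x := by
  classical
  set T := ∑ j, |x j| with hT
  have hL : ∑ i, ∑ j ∈ Finset.univ.filter (fun j => j ≠ i), Real.log (x i - x j)
      ≤ ∑ i : Fin d, ((d : ℝ) * |x i| + T) := by
    apply Finset.sum_le_sum
    intro i _
    calc ∑ j ∈ Finset.univ.filter (fun j => j ≠ i), Real.log (x i - x j)
        ≤ ∑ j ∈ Finset.univ.filter (fun j => j ≠ i), (|x i| + |x j|) := by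
          apply Finset.sum_le_sum
          intro j _
          calc Real.log (x i - x j) ≤ |x i - x j| := log_le_abs' _
            _ ≤ |x i| + |x j| := abs_sub _ _
      _ ≤ ∑ j : Fin d, (|x i| + |x j|) := by
          apply Finset.sum_le_sum_of_subset_of_nonneg (Finset.filter_subset _ _)
          intro j _ _
          positivity
      _ = (d : ℝ) * |x i| + T := by
          rw [Finset.sum_add_distrib, Finset.sum_const, Finset.card_univ, Fintype.card_fin]
          simp [hT, nsmul_eq_mul]
  have step1 : ∑ i, ((x i) ^ 2 / 2 - c i * x i) - h * lam / 2 * ∑ i : Fin d, ((d : ℝ) * |x i| + T)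
      ≤ Phi lam h c x := by
    unfold Phi
    have := mul_le_mul_of_nonneg_left hL (by linarith : (0:ℝ) ≤ h * lam / 2)
    linarith
  have step2 : ∑ i : Fin d, ((d : ℝ) * |x i| + T) = 2 * (d : ℝ) * T := by
    rw [Finset.sum_add_distrib, Finset.sum_const, Finset.card_univ, Fintype.card_fin,
      ← Finset.mul_sum, ← hT]
    push_cast
    ring
  have step3 : ∑ i : Fin d, ((x i) ^ 2 / 2 - (|c i| + h * lam * d) * |x i|)
      ≤ ∑ i, ((x i) ^ 2 / 2 - c i * x i) - h * lam / 2 * (2 * (d : ℝ) * T) := by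
    have : h * lam / 2 * (2 * (d : ℝ) * T) = ∑ i : Fin d, h * lam * d * |x i| := by
      rw [← Finset.mul_sum, ← hT]; ring
    rw [this, ← Finset.sum_sub_distrib]
    apply Finset.sum_le_sum
    intro i _
    have : c i * x i ≤ |c i| * |x i| := by
      calc c i * x i ≤ |c i * x i| := le_abs_self _
        _ = |c i| * |x i| := abs_mul _ _
    nlinarith
  have step4 : (x k) ^ 2 / 2 - (|c k| + h * lam * d) * |x k|
      - (∑ i, (|c i| + h * lam * d) ^ 2 / 2)
      ≤ ∑ i : Fin d, ((x i) ^ 2 / 2 - (|c i| + h * lam * d) * |x i|) := by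
    rw [← Finset.add_sum_erase _ (fun i => (x i) ^ 2 / 2 - (|c i| + h * lam * d) * |x i|)
      (Finset.mem_univ k)]
    have hrest : ∑ i ∈ Finset.univ.erase k, (-((|c i| + h * lam * d) ^ 2 / 2))
        ≤ ∑ i ∈ Finset.univ.erase k, ((x i) ^ 2 / 2 - (|c i| + h * lam * d) * |x i|) := by
      apply Finset.sum_le_sum
      intro i _
      nlinarith [sq_nonneg (|x i| - (|c i| + h * lam * d)), sq_abs (x i)]
    have hC' : ∑ i ∈ Finset.univ.erase k, ((|c i| + h * lam * d) ^ 2 / 2)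
        ≤ ∑ i, ((|c i| + h * lam * d) ^ 2 / 2) :=
      Finset.sum_le_sum_of_subset_of_nonneg (Finset.erase_subset _ _)
        (fun i _ _ => by positivity)
    have hrest' : -(∑ i ∈ Finset.univ.erase k, ((|c i| + h * lam * d) ^ 2 / 2))
        ≤ ∑ i ∈ Finset.univ.erase k, ((x i) ^ 2 / 2 - (|c i| + h * lam * d) * |x i|) := by
      rw [← Finset.sum_neg_distrib]; exact hrest
    linarith
  rw [step2] at step1
  linarith


lemma Phi_lower2 {d : ℕ} (lam h : ℝ) (c : Fin d → ℝ) (hlh : 0 ≤ h * lam) (R : ℝ) (hR : 1 ≤ R)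
    (x : Fin d → ℝ) (hxR : ∀ i, |x i| ≤ R) (p q : Fin d) (hpq : p < q) :
    -(∑ i, (c i) ^ 2 / 2)
      - h * lam / 2 * ((d : ℝ) * ((d : ℝ) * Real.log (2 * R + 1)) + Real.log (x q - x p))
      ≤ Phi lam h c x := by
  classical
  set M := Real.log (2 * R + 1) with hM
  have hM0 : 0 ≤ M := Real.log_nonneg (by linarith)
  have hterm : ∀ k j : Fin d, Real.log (x k - x j) ≤ M := by
    intro k j
    rw [← Real.log_abs]
    rcases eq_or_ne (x k - x j) 0 with h0 | h0
    · rw [h0]; simpa using hM0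
    · apply Real.log_le_log (abs_pos.mpr h0)
      have := abs_sub_abs_le_abs_sub (x k) (x j)
      have h1 := hxR k
      have h2 := hxR j
      calc |x k - x j| ≤ |x k| + |x j| := abs_sub _ _
        _ ≤ 2 * R + 1 := by linarith
  have hinner : ∀ k : Fin d, ∑ j ∈ Finset.univ.filter (fun j => j ≠ k), Real.log (x k - x j)
      ≤ (d : ℝ) * M + (if k = q then Real.log (x q - x p) else 0) := by
    intro k
    have hcard : ∀ s : Finset (Fin d), (s.card : ℝ) ≤ (d : ℝ) := by
      intro s
      exact_mod_cast (Finset.card_le_univ s).trans_eq (by simp)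
    by_cases hk : k = q
    · subst hk
      have hpmem : p ∈ Finset.univ.filter (fun j => j ≠ k) := by simp [ne_of_lt hpq]
      rw [← Finset.add_sum_erase _ _ hpmem, if_pos rfl]
      have hsum : ∑ j ∈ (Finset.univ.filter (fun j => j ≠ k)).erase p, Real.log (x k - x j)
          ≤ (d : ℝ) * M := by
        calc ∑ j ∈ (Finset.univ.filter (fun j => j ≠ k)).erase p, Real.log (x k - x j)
            ≤ ∑ j ∈ (Finset.univ.filter (fun j => j ≠ k)).erase p, M :=
              Finset.sum_le_sum fun j _ => hterm k j
          _ = ((Finset.univ.filter (fun j => j ≠ k)).erase p).card * M := by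
              rw [Finset.sum_const, nsmul_eq_mul]
          _ ≤ (d : ℝ) * M := mul_le_mul_of_nonneg_right (hcard _) hM0
      linarith
    · rw [if_neg hk]
      have hc : ∑ j ∈ Finset.univ.filter (fun j => j ≠ k), Real.log (x k - x j)
          ≤ (d : ℝ) * M := by
        calc ∑ j ∈ Finset.univ.filter (fun j => j ≠ k), Real.log (x k - x j)
            ≤ ∑ j ∈ Finset.univ.filter (fun j => j ≠ k), M :=
              Finset.sum_le_sum fun j _ => hterm k j
          _ = ((Finset.univ.filter (fun j => j ≠ k)).card : ℝ) * M := by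
              rw [Finset.sum_const, nsmul_eq_mul]
          _ ≤ (d : ℝ) * M := mul_le_mul_of_nonneg_right (hcard _) hM0
      linarith
  have hL : ∑ k, ∑ j ∈ Finset.univ.filter (fun j => j ≠ k), Real.log (x k - x j)
      ≤ (d : ℝ) * ((d : ℝ) * M) + Real.log (x q - x p) := by
    calc ∑ k, ∑ j ∈ Finset.univ.filter (fun j => j ≠ k), Real.log (x k - x j)
        ≤ ∑ k : Fin d, ((d : ℝ) * M + (if k = q then Real.log (x q - x p) else 0)) :=
          Finset.sum_le_sum fun k _ => hinner k
      _ = (d : ℝ) * ((d : ℝ) * M) + Real.log (x q - x p) := by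
          rw [Finset.sum_add_distrib, Finset.sum_const, Finset.card_univ, Fintype.card_fin,
            nsmul_eq_mul, Finset.sum_ite_eq' Finset.univ q, if_pos (Finset.mem_univ q)]
  have hQ : -(∑ i, (c i) ^ 2 / 2) ≤ ∑ i, ((x i) ^ 2 / 2 - c i * x i) := by
    rw [← Finset.sum_neg_distrib]
    apply Finset.sum_le_sum
    intro i _
    nlinarith [sq_nonneg (x i - c i)]
  unfold Phi
  have := mul_le_mul_of_nonneg_left hL (by linarith : (0:ℝ) ≤ h * lam / 2)
  linarith


lemma isOpen_strictMono {d : ℕ} : IsOpen {x : Fin d → ℝ | StrictMono x} := by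
  have : {x : Fin d → ℝ | StrictMono x} = ⋂ p : Fin d, ⋂ q : Fin d,
      {x : Fin d → ℝ | p < q → x p < x q} := by
    ext x
    simp only [Set.mem_setOf_eq, Set.mem_iInter]
    exact ⟨fun hx p q hpq => hx hpq, fun hx a b hab => hx a b hab⟩
  rw [this]
  refine isOpen_iInter_of_finite fun p => isOpen_iInter_of_finite fun q => ?_
  by_cases hpq : p < q
  · have : {x : Fin d → ℝ | p < q → x p < x q} = {x : Fin d → ℝ | x p < x q} := by
      ext x; simp [hpq]
    rw [this]
    exact isOpen_lt (continuous_apply p) (continuous_apply q)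
  · have : {x : Fin d → ℝ | p < q → x p < x q} = Set.univ := by
      ext x; simp [hpq]
    rw [this]
    exact isOpen_univ


lemma continuousOn_Phi {d : ℕ} (lam h : ℝ) (c : Fin d → ℝ) (K : Set (Fin d → ℝ))
    (hK : ∀ x ∈ K, ∀ i j : Fin d, i ≠ j → x i ≠ x j) :
    ContinuousOn (Phi lam h c) K := by
  unfold Phi
  apply ContinuousOn.sub
  · apply Continuous.continuousOn
    apply continuous_finset_sum
    intro i _
    exact (((continuous_apply i).pow 2).div_const 2).sub
      (continuous_const.mul (continuous_apply i))
  · apply ContinuousOn.mul continuousOn_const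
    apply continuousOn_finset_sum
    intro i _
    apply continuousOn_finset_sum
    intro j hj
    have hji : j ≠ i := (Finset.mem_filter.mp hj).2
    apply ContinuousOn.log
    · exact ((continuous_apply i).sub (continuous_apply j)).continuousOn
    · intro x hx
      exact sub_ne_zero.mpr (hK x hx i j (Ne.symm hji))


lemma uniq_le {d : ℕ} (hd : 0 < d) (lam h : ℝ) (hlam : 0 < lam) (hh : 0 < h)
    (c : Fin d → ℝ) (x y : Fin d → ℝ) (hx : StrictMono x) (hy : StrictMono y)
    (ex : ∀ i, x i - h * lam * ∑ j ∈ Finset.univ.filter (fun j => j ≠ i), 1 / (x i - x j) = c i)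
    (ey : ∀ i, y i - h * lam * ∑ j ∈ Finset.univ.filter (fun j => j ≠ i), 1 / (y i - y j) = c i) :
    ∀ k, x k ≤ y k := by
  have hne : (Finset.univ : Finset (Fin d)).Nonempty := by
    simpa [Finset.univ_nonempty_iff] using Fin.pos_iff_nonempty.mp hd
  obtain ⟨i, -, hi⟩ := Finset.exists_max_image Finset.univ (fun k => x k - y k) hne
  have key : x i - y i ≤ 0 := by
    have hsum : ∑ j ∈ Finset.univ.filter (fun j => j ≠ i), 1 / (x i - x j)
        ≤ ∑ j ∈ Finset.univ.filter (fun j => j ≠ i), 1 / (y i - y j) := by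
      apply Finset.sum_le_sum
      intro j hj
      have hji : j ≠ i := (Finset.mem_filter.mp hj).2
      set a := x i - x j with ha
      set b := y i - y j with hb
      have hab : 0 < a * b := by
        rcases lt_or_gt_of_ne hji with hlt | hgt
        · exact mul_pos (by simpa [ha] using sub_pos.mpr (hx hlt)) (by simpa [hb] using sub_pos.mpr (hy hlt))
        · have h1 : a < 0 := by simpa [ha] using sub_neg.mpr (hx hgt)
          have h2 : b < 0 := by simpa [hb] using sub_neg.mpr (hy hgt)
          exact mul_pos_of_neg_of_neg h1 h2
      have hA : a ≠ 0 := by intro h0; rw [h0] at hab; simp at hab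
      have hB : b ≠ 0 := by rintro h0; rw [h0] at hab; simp at hab
      have hba : b - a ≤ 0 := by
        have := hi j (Finset.mem_univ j)
        simp only [ha, hb]
        linarith
      have heq : 1 / a - 1 / b = (b - a) / (a * b) := by
        field_simp
      have : 1 / a - 1 / b ≤ 0 := by
        rw [heq]; exact div_nonpos_of_nonpos_of_nonneg hba hab.le
      linarith
    have exi := ex i
    have eyi := ey i
    have : x i - y i = h * lam * (∑ j ∈ Finset.univ.filter (fun j => j ≠ i), 1 / (x i - x j)
        - ∑ j ∈ Finset.univ.filter (fun j => j ≠ i), 1 / (y i - y j)) := by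
      rw [mul_sub]; linarith
    rw [this]
    exact mul_nonpos_of_nonneg_of_nonpos (by positivity) (by linarith)
  intro k
  have := hi k (Finset.mem_univ k)
  linarith


lemma exists_sol {d : ℕ} (hd : 2 ≤ d) (lam h : ℝ) (hlam : 0 < lam) (hh : 0 < h)
    (c : Fin d → ℝ) :
    ∃ x : Fin d → ℝ, StrictMono x ∧
      ∀ i : Fin d,
        x i - h * lam * ∑ j ∈ Finset.univ.filter (fun j => j ≠ i), 1 / (x i - x j) = c i := by
  classical
  have hlh : 0 < h * lam := mul_pos hh hlam
  set x₀ : Fin d → ℝ := fun i => (i : ℝ) with hx₀def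
  have hx₀mono : StrictMono x₀ := by
    intro a b hab
    show ((a : ℕ) : ℝ) < ((b : ℕ) : ℝ)
    exact_mod_cast hab
  set B : ℝ := Phi lam h c x₀ with hB
  set A : ℝ := ∑ i, (|c i| + h * lam * d) with hA
  have hAk : ∀ k, |c k| + h * lam * d ≤ A :=
    fun k => Finset.single_le_sum (f := fun i => |c i| + h * lam * (d:ℝ))
      (fun i _ => by positivity) (Finset.mem_univ k)
  have hA0 : 0 ≤ A := Finset.sum_nonneg fun i _ => by positivity
  set C : ℝ := ∑ i, (|c i| + h * lam * d) ^ 2 / 2 with hC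
  have hC0 : 0 ≤ C := Finset.sum_nonneg fun i _ => by positivity
  set C₂ : ℝ := ∑ i, (c i) ^ 2 / 2 with hC₂
  have hC₂0 : 0 ≤ C₂ := Finset.sum_nonneg fun i _ => by positivity
  have hd0 : (0:ℝ) ≤ d := Nat.cast_nonneg d
  have hdR : (2:ℝ) ≤ d := by exact_mod_cast hd
  set R : ℝ := 2 * A + 2 * C + 2 * |B| + 2 + d with hR
  have hB0 : 0 ≤ |B| := abs_nonneg B
  have hR1 : 1 ≤ R := by rw [hR]; linarith
  -- Claim 1 : far away points have large Phi
  have claim1 : ∀ x : Fin d → ℝ, ∀ k, R ≤ |x k| → B < Phi lam h c x := by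
    intro x k hk
    have hPl := Phi_lower lam h c hlh.le x k
    have habs : (x k) ^ 2 = |x k| ^ 2 := (sq_abs (x k)).symm
    have h1 : |x k| ^ 2 / 2 - A * |x k| - C ≤ Phi lam h c x := by
      have hmul : (|c k| + h * lam * d) * |x k| ≤ A * |x k| :=
        mul_le_mul_of_nonneg_right (hAk k) (abs_nonneg _)
      rw [← hC] at hPl
      linarith
    have h2 : |x k| * (|x k| / 2 - A) - C ≤ Phi lam h c x := by nlinarith [h1]
    have h3 : C + |B| + 1 ≤ |x k| / 2 - A := by rw [hR] at hk; linarith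
    have h4 : 1 * (C + |B| + 1) ≤ |x k| * (|x k| / 2 - A) :=
      mul_le_mul (le_trans hR1 hk) h3 (by linarith) (by linarith)
    calc B ≤ |B| := le_abs_self B
      _ < C + |B| + 1 - C := by linarith
      _ ≤ Phi lam h c x := by linarith
  set M : ℝ := Real.log (2 * R + 1) with hM
  have hM0 : 0 ≤ M := Real.log_nonneg (by linarith)
  set E : ℝ := 2 / (h * lam) * (|B| + C₂ + 1) + (d : ℝ) * ((d : ℝ) * M) + 1 with hE
  have hE0 : 0 ≤ E := by
    have : 0 ≤ 2 / (h * lam) * (|B| + C₂ + 1) := by positivity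
    rw [hE]; positivity
  set ε : ℝ := Real.exp (-E) with hε
  have hε0 : 0 < ε := Real.exp_pos _
  have hε1 : ε ≤ 1 := Real.exp_le_one_iff.mpr (by linarith)
  -- Claim 2 : near-collision points have large Phi
  have claim2 : ∀ x : Fin d → ℝ, (∀ i, |x i| ≤ R) →
      ∀ p q : Fin d, p < q → 0 < x q - x p → x q - x p < ε → B < Phi lam h c x := by
    intro x hxR p q hpq hpos hgap
    have hPl := Phi_lower2 lam h c hlh.le R hR1 x hxR p q hpq
    rw [← hC₂, ← hM] at hPl
    have hlog : Real.log (x q - x p) ≤ -E := by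
      calc Real.log (x q - x p) ≤ Real.log ε := Real.log_le_log hpos hgap.le
        _ = -E := by rw [hε, Real.log_exp]
    have hmul : h * lam / 2 * ((d : ℝ) * ((d : ℝ) * M) + Real.log (x q - x p))
        ≤ h * lam / 2 * ((d : ℝ) * ((d : ℝ) * M) - E) :=
      mul_le_mul_of_nonneg_left (by linarith) (by linarith)
    have hfield : h * lam / 2 * (2 / (h * lam) * (|B| + C₂ + 1)) = |B| + C₂ + 1 := by
      field_simp
    have hexp : h * lam / 2 * ((d : ℝ) * ((d : ℝ) * M) - E) = -(|B| + C₂ + 1) - h * lam / 2 := by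
      calc h * lam / 2 * ((d : ℝ) * ((d : ℝ) * M) - E)
          = -(h * lam / 2 * (2 / (h * lam) * (|B| + C₂ + 1))) - h * lam / 2 := by rw [hE]; ring
        _ = -(|B| + C₂ + 1) - h * lam / 2 := by rw [hfield]
    calc B ≤ |B| := le_abs_self B
      _ < -C₂ - (-(|B| + C₂ + 1) - h * lam / 2) := by linarith
      _ = -C₂ - h * lam / 2 * ((d : ℝ) * ((d : ℝ) * M) - E) := by rw [hexp]
      _ ≤ -C₂ - h * lam / 2 * ((d : ℝ) * ((d : ℝ) * M) + Real.log (x q - x p)) := by linarith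
      _ ≤ Phi lam h c x := hPl
  -- the compact set K
  set K : Set (Fin d → ℝ) := (Set.univ.pi fun _ : Fin d => Set.Icc (-R) R) ∩
      {x : Fin d → ℝ | ∀ p q : Fin d, p < q → ε ≤ x q - x p} with hK
  have hKmono : ∀ x ∈ K, StrictMono x := by
    intro x hx p q hpq
    have := hx.2 p q hpq
    linarith
  have hx₀K : x₀ ∈ K := by
    constructor
    · intro i _
      have h1 : (i : ℝ) < d := by exact_mod_cast i.isLt
      have h2 : (0:ℝ) ≤ (i : ℝ) := Nat.cast_nonneg _
      constructor <;> simp only [hx₀def] <;> [linarith; linarith]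
    · intro p q hpq
      have : (p : ℝ) + 1 ≤ (q : ℝ) := by exact_mod_cast Nat.succ_le_of_lt hpq
      simp only [hx₀def, Set.mem_setOf_eq]
      linarith
  have hKcl : IsClosed {x : Fin d → ℝ | ∀ p q : Fin d, p < q → ε ≤ x q - x p} := by
    have : {x : Fin d → ℝ | ∀ p q : Fin d, p < q → ε ≤ x q - x p}
        = ⋂ p : Fin d, ⋂ q : Fin d, {x : Fin d → ℝ | p < q → ε ≤ x q - x p} := by
      ext x; simp only [Set.mem_setOf_eq, Set.mem_iInter]
    rw [this]
    refine isClosed_iInter fun p => isClosed_iInter fun q => ?_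
    by_cases hpq : p < q
    · have : {x : Fin d → ℝ | p < q → ε ≤ x q - x p} = {x : Fin d → ℝ | ε ≤ x q - x p} := by
        ext x; simp [hpq]
      rw [this]
      exact isClosed_le continuous_const ((continuous_apply q).sub (continuous_apply p))
    · have : {x : Fin d → ℝ | p < q → ε ≤ x q - x p} = Set.univ := by
        ext x; simp [hpq]
      rw [this]; exact isClosed_univ
  have hKcpt : IsCompact K :=
    (isCompact_univ_pi fun _ => isCompact_Icc).inter_right hKcl
  have hKne : K.Nonempty := ⟨x₀, hx₀K⟩
  have hKcont : ContinuousOn (Phi lam h c) K :=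
    continuousOn_Phi lam h c K (fun x hx i j hij => (hKmono x hx).injective.ne hij)
  obtain ⟨xs, hxsK, hmin⟩ := hKcpt.exists_isMinOn hKne hKcont
  have hxsmono : StrictMono xs := hKmono xs hxsK
  have hminB : Phi lam h c xs ≤ B := hmin hx₀K
  -- global minimality over all strictly monotone points
  have global : ∀ y : Fin d → ℝ, StrictMono y → Phi lam h c xs ≤ Phi lam h c y := by
    intro y hy
    by_cases hyK : y ∈ K
    · exact hmin hyK
    · rw [hK, Set.mem_inter_iff, not_and_or] at hyK
      rcases hyK with hy1 | hy2
      · rw [Set.mem_pi] at hy1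
        push_neg at hy1
        obtain ⟨i, -, hi⟩ := hy1
        rw [Set.mem_Icc, not_and_or] at hi
        have : R ≤ |y i| := by
          rcases hi with hi | hi
          · push_neg at hi; rw [abs_of_nonpos (by linarith)]; linarith
          · push_neg at hi
            calc R ≤ y i := hi.le
              _ ≤ |y i| := le_abs_self _
        exact hminB.trans (le_of_lt (claim1 y i this))
      · simp only [Set.mem_setOf_eq] at hy2
        push_neg at hy2
        obtain ⟨p, q, hpq, hgap⟩ := hy2
        by_cases hybd : ∀ i, |y i| ≤ R
        · exact hminB.trans (le_of_lt (claim2 y hybd p q hpq (sub_pos.mpr (hy hpq)) hgap))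
        · push_neg at hybd
          obtain ⟨i, hi⟩ := hybd
          exact hminB.trans (le_of_lt (claim1 y i hi.le))
  -- each coordinate satisfies the equation
  refine ⟨xs, hxsmono, ?_⟩
  intro i
  have hupcont : Continuous (fun t : ℝ => Function.update xs i t) := by
    apply continuous_pi
    intro k
    by_cases hk : k = i
    · subst hk
      simp only [Function.update_self]
      exact continuous_id
    · simp only [Function.update_of_ne hk]
      exact continuous_const
  have hpre : (fun t : ℝ => Function.update xs i t) ⁻¹' {x : Fin d → ℝ | StrictMono x}
      ∈ nhds (xs i) := by
    apply hupcont.continuousAt.preimage_mem_nhds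
    apply isOpen_strictMono.mem_nhds
    show StrictMono (Function.update xs i (xs i))
    rw [Function.update_eq_self]
    exact hxsmono
  have hloc : IsLocalMin (fun t => Phi lam h c (Function.update xs i t)) (xs i) := by
    have hev : ∀ᶠ t in nhds (xs i), Phi lam h c xs ≤ Phi lam h c (Function.update xs i t) := by
      filter_upwards [hpre] with t ht
      exact global _ ht
    unfold IsLocalMin IsMinFilter
    simpa [Function.update_eq_self] using hev
  have hderiv := hasDerivAt_phi_update lam h c xs i (fun j hj => hxsmono.injective.ne hj)
  have hzero := hloc.hasDerivAt_eq_zero hderiv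
  have hone : ∑ j ∈ Finset.univ.filter (fun j => j ≠ i), 1 / (xs i - xs j)
      = ∑ j ∈ Finset.univ.filter (fun j => j ≠ i), (xs i - xs j)⁻¹ := by
    simp [one_div]
  rw [hone]
  linarith


/-- Let `d ≥ 2`, `λ > 0`, `h > 0`, `c ∈ ℝ^d`.  Then there exists a unique
`x ∈ Δ_d` (strictly increasing coordinates) such that for every `i`,
`x_i − h·λ·∑_{j ≠ i} 1/(x_i − x_j) = c_i`; i.e. each implicit Euler–Maruyama
step is well defined and takes values in `Δ_d`. -/
theorem semi_implicit_step_exists_unique (d : ℕ) (hd : 2 ≤ d)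
    (lam h : ℝ) (hlam : 0 < lam) (hh : 0 < h) (c : Fin d → ℝ) :
    ∃! x : Fin d → ℝ, StrictMono x ∧
      ∀ i : Fin d,
        x i - h * lam * ∑ j ∈ Finset.univ.filter (fun j => j ≠ i), 1 / (x i - x j)
          = c i := by
  obtain ⟨x, hx, hxeq⟩ := exists_sol hd lam h hlam hh c
  refine ⟨x, ⟨hx, hxeq⟩, ?_⟩
  rintro y ⟨hy, hyeq⟩
  have h1 := uniq_le (by omega) lam h hlam hh c y x hy hx hyeq hxeq
  have h2 := uniq_le (by omega) lam h hlam hh c x y hx hy hxeq hyeq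
  funext k
  exact le_antisymm (h1 k) (h2 k)
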